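/- Let B ≥ 2 be an integer, let U be a convex subset of a real normed vector space, and let h : U → ℝ be barycentrically B-almost convex and bounded above on every compact subset of U. Then for every n ≥ 1, all points x_0,…,x_n ∈ U, and every (t_0,…,t_n) ∈ Δ_n, h(t_0 x_0 + ⋯ + t_n x_n) ≤ ∑_{i=0}^n H_B(t_i) + ∑_{i=0}^n t_i h(x_i), and in particular h(t_0 x_0 + ⋯ + t_n x_n) ≤ κ_B(n) + ∑_{i=0}^n t_i h(x_i). -/

import Mathlib

open scoped BigOperators

/-- `H_B(x) = ∑_{k=0}^∞ {B^k x}/B^k` where `{y}` is the fractional part. -/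
noncomputable def HB (B : ℕ) (x : ℝ) : ℝ :=
  ∑' k : ℕ, Int.fract ((B : ℝ) ^ k * x) / (B : ℝ) ^ k

/-- `κ_B(n) = ⌊log_B n⌋ + 1 + n/((B−1)·B^⌊log_B n⌋)`. -/
noncomputable def kappa (B n : ℕ) : ℝ :=
  (⌊Real.logb B n⌋ : ℝ) + 1 +
    (n : ℝ) / (((B : ℝ) - 1) * (B : ℝ) ^ ⌊Real.logb B n⌋)

open Finset


lemma digits_sum (B a : ℕ) (hB : 2 ≤ B) : ∀ l : ℕ, ∑ k ∈ range l, (a / B ^ k % B) * B ^ k = a % B ^ l := by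
  intro l
  induction l with
  | zero => simp [Nat.mod_one]
  | succ l ih =>
    rw [Finset.sum_range_succ, ih, Nat.mod_pow_succ]
    ring

lemma pack (B m Q : ℕ) (hB : 2 ≤ B) (n : ℕ) (a : ℕ → ℕ)
    (ha : ∑ i ∈ range n, a i = Q * B ^ m) :
    ∃ c : ℕ → ℕ → ℕ,
      (∀ i < n, ∑ j ∈ range Q, c i j = a i) ∧
      (∀ j < Q, ∑ i ∈ range n, c i j = B ^ m) ∧
      (∀ l ≤ m, ∑ i ∈ range n, ∑ j ∈ range Q, c i j % B ^ l
          ≤ ∑ i ∈ range n, a i % B ^ l) := by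
  have hB0 : 0 < B := by omega
  -- supplies
  set s : ℕ → ℕ → ℕ := fun i k => if k = m then a i / B ^ m else a i / B ^ k % B with hs
  set pre : ℕ → ℕ → ℕ := fun i k => ∑ i' ∈ range i, s i' k with hpre
  set Uk : ℕ → ℕ := fun k => ∑ k' ∈ Ico k (m+1), pre n k' * B ^ k' with hUk
  set st : ℕ → ℕ → ℕ := fun i k => Uk (k+1) + pre i k * B ^ k with hst
  set f : ℕ → ℕ → ℕ := fun j x => min (max x (j * B ^ m)) ((j+1) * B ^ m) with hf
  -- basic facts
  have hsa : ∀ i, ∑ k ∈ range (m+1), s i k * B ^ k = a i := by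
    intro i
    rw [Finset.sum_range_succ]
    have h1 : ∑ k ∈ range m, s i k * B ^ k = a i % B ^ m := by
      rw [← digits_sum B (a i) hB m]
      refine Finset.sum_congr rfl fun k hk => ?_
      have : k ≠ m := (Finset.mem_range.mp hk).ne
      simp [hs, this]
    rw [h1]
    simp [hs]
    exact Nat.mod_add_div' (a i) (B ^ m)
  have hstep : ∀ i k, st (i+1) k = st i k + s i k * B ^ k := by
    intro i k
    simp only [hst, hpre, Finset.sum_range_succ, add_mul, add_assoc]
  have hstmono : ∀ i k, st i k ≤ st (i+1) k := fun i k => by rw [hstep]; omega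
  have hstmono' : ∀ k, Monotone (fun i => st i k) := by
    intro k
    exact monotone_nat_of_le_succ fun i => hstmono i k
  have hUksucc : ∀ k, k ≤ m → Uk k = pre n k * B ^ k + Uk (k+1) := by
    intro k hk
    rw [hUk]
    exact Finset.sum_eq_sum_Ico_succ_bot (by omega) _
  have hsttop : ∀ k, k ≤ m → st n k = Uk k := by
    intro k hk; rw [hUksucc k hk, hst]; ring
  have hUkm1 : Uk (m+1) = 0 := by simp [hUk]
  have hUk0 : Uk 0 = Q * B ^ m := by
    have h1 : Uk 0 = ∑ k' ∈ range (m+1), ∑ i ∈ range n, s i k' * B ^ k' := by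
      show ∑ k' ∈ Ico 0 (m+1), pre n k' * B ^ k' = _
      rw [← range_eq_Ico]
      exact Finset.sum_congr rfl fun k' _ => by rw [hpre, Finset.sum_mul]
    rw [h1, Finset.sum_comm, ← ha]
    exact Finset.sum_congr rfl fun i _ => hsa i
  have hfmono : ∀ j, Monotone (f j) := by
    intro j x y hxy
    simp only [hf]
    exact min_le_min (max_le_max hxy le_rfl) le_rfl
  have hUkmono : ∀ k, Uk k ≤ Uk 0 := by
    intro k
    rw [hUk]
    apply Finset.sum_le_sum_of_subset
    apply Finset.Ico_subset_Ico <;> omega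
  have hstb : ∀ i k, i ≤ n → k ≤ m → st i k ≤ Q * B ^ m := by
    intro i k hi hk
    calc st i k ≤ st n k := hstmono' k hi
    _ = Uk k := hsttop k hk
    _ ≤ Uk 0 := hUkmono k
    _ = Q * B ^ m := hUk0
  -- clamp identity in ℤ
  have hfz : ∀ j x : ℕ, (f j x : ℤ) =
      min (x:ℤ) (((j:ℤ)+1) * B ^ m) - min (x:ℤ) ((j:ℤ) * B ^ m) + (j:ℤ) * B ^ m := by
    intro j x
    have hPQ : (j:ℤ) * B ^ m ≤ ((j:ℤ)+1) * B ^ m := by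
      have : (0:ℤ) ≤ (B:ℤ) ^ m := by positivity
      nlinarith
    simp only [hf]
    push_cast
    generalize (j:ℤ) * (B:ℤ) ^ m = P at *
    generalize ((j:ℤ)+1) * (B:ℤ) ^ m = Q' at *
    omega
  have hsumf : ∀ x : ℕ, x ≤ Q * B ^ m →
      ∑ j ∈ range Q, (f j x : ℤ) = (x:ℤ) + ∑ j ∈ range Q, (j:ℤ) * B ^ m := by
    intro x hx
    have h1 : ∑ j ∈ range Q, (f j x : ℤ) =
        ∑ j ∈ range Q, (min (x:ℤ) (((j:ℤ)+1) * B ^ m) - min (x:ℤ) ((j:ℤ) * B ^ m))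
          + ∑ j ∈ range Q, (j:ℤ) * B ^ m := by
      rw [← Finset.sum_add_distrib]
      exact Finset.sum_congr rfl fun j _ => hfz j x
    rw [h1]
    congr 1
    have h2 := Finset.sum_range_sub (fun j : ℕ => min (x:ℤ) ((j:ℤ) * B ^ m)) Q
    have h3 : ∑ j ∈ range Q, (min (x:ℤ) (((j:ℤ)+1) * B ^ m) - min (x:ℤ) ((j:ℤ) * B ^ m))
        = min (x:ℤ) (((Q:ℕ):ℤ) * B ^ m) - min (x:ℤ) (((0:ℕ):ℤ) * B ^ m) := by
      rw [← h2]
      refine Finset.sum_congr rfl fun j _ => ?_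
      push_cast
      ring_nf
    have hx' : (x:ℤ) ≤ ((Q:ℕ):ℤ) * B ^ m := by exact_mod_cast hx
    have h0 : (((0:ℕ):ℤ)) * (B:ℤ) ^ m = 0 := by push_cast; ring
    rw [h3, min_eq_left hx', h0, min_eq_right (by positivity : (0:ℤ) ≤ (x:ℤ))]
    ring
  -- per-(i,k) column-sum identity
  have hinner : ∀ i, i < n → ∀ k, k ≤ m →
      ∑ j ∈ range Q, (f j (st (i+1) k) - f j (st i k)) = s i k * B ^ k := by
    intro i hi k hk
    have hz : ((∑ j ∈ range Q, (f j (st (i+1) k) - f j (st i k)) : ℕ) : ℤ)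
        = (s i k * B ^ k : ℕ) := by
      push_cast [Nat.cast_sub (hfmono _ (hstmono i k))]
      rw [Finset.sum_sub_distrib, hsumf _ (hstb (i+1) k (by omega) hk),
        hsumf _ (hstb i k (by omega) hk)]
      have := hstep i k
      have hc : ((st (i+1) k : ℕ) : ℤ) = (st i k : ℤ) + (s i k : ℤ) * (B:ℤ) ^ k := by
        rw [this]; push_cast; ring
      rw [hc]; ring
    exact_mod_cast hz
  refine ⟨fun i j => ∑ k ∈ range (m+1), (f j (st (i+1) k) - f j (st i k)), ?_, ?_, ?_⟩
  · -- row sums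
    intro i hi
    rw [Finset.sum_comm]
    rw [Finset.sum_congr rfl (fun k hk => hinner i hi k (by
      have := Finset.mem_range.mp hk; omega))]
    exact hsa i
  · -- col sums
    intro j hj
    have hcast : ∀ i, ((∑ k ∈ range (m+1), (f j (st (i+1) k) - f j (st i k)) : ℕ) : ℤ)
        = ∑ k ∈ range (m+1), ((f j (st (i+1) k) : ℤ) - (f j (st i k) : ℤ)) := by
      intro i
      push_cast [Nat.cast_sub (hfmono j (hstmono i _))]
      rfl
    have hz : (∑ i ∈ range n, ((∑ k ∈ range (m+1), (f j (st (i+1) k) - f j (st i k)) : ℕ) : ℤ)) = ((B ^ m : ℕ) : ℤ) := by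
      calc ∑ i ∈ range n, ((∑ k ∈ range (m+1), (f j (st (i+1) k) - f j (st i k)) : ℕ) : ℤ)
          = ∑ i ∈ range n, ∑ k ∈ range (m+1), ((f j (st (i+1) k) : ℤ) - (f j (st i k) : ℤ)) :=
            Finset.sum_congr rfl fun i _ => hcast i
        _ = ∑ k ∈ range (m+1), ∑ i ∈ range n, ((f j (st (i+1) k) : ℤ) - (f j (st i k) : ℤ)) :=
            Finset.sum_comm
        _ = ∑ k ∈ range (m+1), ((f j (st n k) : ℤ) - (f j (st 0 k) : ℤ)) := by
            refine Finset.sum_congr rfl fun k _ => ?_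
            exact Finset.sum_range_sub (fun i => (f j (st i k) : ℤ)) n
        _ = ∑ k ∈ range (m+1), ((f j (Uk k) : ℤ) - (f j (Uk (k+1)) : ℤ)) := by
            refine Finset.sum_congr rfl fun k hk => ?_
            have hk' : k ≤ m := by have := Finset.mem_range.mp hk; omega
            rw [hsttop k hk']
            congr 2
            simp [hst, hpre]
        _ = (f j (Uk 0) : ℤ) - (f j (Uk (m+1)) : ℤ) :=
            Finset.sum_range_sub' (fun k => (f j (Uk k) : ℤ)) (m+1)
        _ = ((B ^ m : ℕ) : ℤ) := by
            rw [hUkm1, hUk0]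
            have h1 : f j (Q * B ^ m) = (j+1) * B ^ m := by
              simp only [hf]
              have hjQ : (j+1) * B ^ m ≤ Q * B ^ m := Nat.mul_le_mul_right _ (by omega)
              rw [max_eq_left (le_trans (Nat.mul_le_mul_right _ (by omega : j ≤ Q)) le_rfl),
                min_eq_right hjQ]
            have h2 : f j 0 = j * B ^ m := by
              simp only [hf]
              rw [max_eq_right (Nat.zero_le _),
                min_eq_left (Nat.mul_le_mul_right _ (by omega))]
            rw [h1, h2]
            push_cast
            ring
    exact_mod_cast hz
  · -- digit condition
    intro l hl
    have key : ∀ i < n, ∀ j,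
        (∑ k ∈ range (m+1), (f j (st (i+1) k) - f j (st i k))) % B ^ l
          ≤ ∑ k ∈ range l, (f j (st (i+1) k) - f j (st i k)) := by
      intro i hi j
      have hsplit : ∑ k ∈ range (m+1), (f j (st (i+1) k) - f j (st i k))
          = ∑ k ∈ range l, (f j (st (i+1) k) - f j (st i k))
            + ∑ k ∈ Ico l (m+1), (f j (st (i+1) k) - f j (st i k)) := by
        rw [range_eq_Ico, range_eq_Ico]
        exact (Finset.sum_Ico_consecutive (fun k => f j (st (i+1) k) - f j (st i k)) (Nat.zero_le l) (by omega : l ≤ m+1)).symm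
      have hdvd : B ^ l ∣ ∑ k ∈ Ico l (m+1), (f j (st (i+1) k) - f j (st i k)) := by
        apply Finset.dvd_sum
        intro k hk
        have hlk : l ≤ k := (Finset.mem_Ico.mp hk).1
        have hkm : k ≤ m := by have := (Finset.mem_Ico.mp hk).2; omega
        have hdvdst : ∀ i', B ^ k ∣ st i' k := by
          intro i'
          apply Nat.dvd_add
          · rw [hUk]
            apply Finset.dvd_sum
            intro k' hk'
            have hkk' := (Finset.mem_Ico.mp hk').1
            exact Dvd.dvd.mul_left (pow_dvd_pow B (by omega)) _
          · exact Dvd.dvd.mul_left dvd_rfl _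
        have hdvdf : ∀ x, B ^ k ∣ x → B ^ k ∣ f j x := by
          intro x hx
          simp only [hf]
          have hd1 : B ^ k ∣ j * B ^ m := Dvd.dvd.mul_left (pow_dvd_pow B hkm) _
          have hd2 : B ^ k ∣ (j+1) * B ^ m := Dvd.dvd.mul_left (pow_dvd_pow B hkm) _
          have hmax : B ^ k ∣ x ⊔ j * B ^ m := by
            rcases le_total x (j * B ^ m) with hc | hc
            · rw [max_eq_right hc]; exact hd1
            · rw [max_eq_left hc]; exact hx
          rcases le_total (x ⊔ j * B ^ m) ((j+1) * B ^ m) with hc | hc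
          · rw [min_eq_left hc]; exact hmax
          · rw [min_eq_right hc]; exact hd2
        exact dvd_trans (pow_dvd_pow B hlk)
          (Nat.dvd_sub (hdvdf _ (hdvdst (i+1))) (hdvdf _ (hdvdst i)))
      obtain ⟨D, hD⟩ := hdvd
      rw [hsplit, hD, Nat.add_mul_mod_self_left]
      exact Nat.mod_le _ _
    calc ∑ i ∈ range n, ∑ j ∈ range Q,
          (∑ k ∈ range (m+1), (f j (st (i+1) k) - f j (st i k))) % B ^ l
        ≤ ∑ i ∈ range n, ∑ j ∈ range Q,
            ∑ k ∈ range l, (f j (st (i+1) k) - f j (st i k)) := by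
          refine Finset.sum_le_sum fun i hi => Finset.sum_le_sum fun j hj => ?_
          exact key i (Finset.mem_range.mp hi) j
      _ = ∑ i ∈ range n, a i % B ^ l := by
          refine Finset.sum_congr rfl fun i hi => ?_
          rw [Finset.sum_comm]
          rw [Finset.sum_congr rfl (fun k hk => hinner i (Finset.mem_range.mp hi) k (by
            have := Finset.mem_range.mp hk; omega))]
          rw [← digits_sum B (a i) hB l]
          refine Finset.sum_congr rfl fun k hk => ?_
          have hkl : k < l := Finset.mem_range.mp hk
          have : k ≠ m := by omega
          simp [hs, this]

def Gm (B m a : ℕ) : ℕ := ∑ k ∈ range m, a % B ^ (m - k)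

section
variable {E : Type*} [NormedAddCommGroup E] [NormedSpace ℝ E]

lemma discrete_single (B m n : ℕ) (hB : 2 ≤ B) (h : E → ℝ) (x : ℕ → E) (a : ℕ → ℕ)
    (i0 : ℕ) (hi0 : i0 < n) (h0 : a i0 = B ^ m) (hsum : ∑ i ∈ range n, a i = B ^ m) :
    h (∑ i ∈ range n, ((a i : ℝ) / (B:ℝ)^m) • x i) ≤
      (∑ i ∈ range n, (Gm B m (a i) : ℝ)) / (B:ℝ)^m
        + ∑ i ∈ range n, ((a i : ℝ)/(B:ℝ)^m) * h (x i) := by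
  have hBm : ((B:ℝ))^m ≠ 0 := by positivity
  have hzero : ∀ i ∈ range n, i ≠ i0 → a i = 0 := by
    have h1 := Finset.add_sum_erase (range n) a (mem_range.mpr hi0)
    have h2 : ∑ i ∈ (range n).erase i0, a i = 0 := by omega
    intro i hi hne
    exact (Finset.sum_eq_zero_iff.mp h2) i (Finset.mem_erase.mpr ⟨hne, hi⟩)
  have hpt : ∑ i ∈ range n, ((a i : ℝ) / (B:ℝ)^m) • x i = x i0 := by
    rw [Finset.sum_eq_single i0]
    · rw [h0]; push_cast; rw [div_self hBm, one_smul]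
    · intro i hi hne; rw [hzero i hi hne]; simp
    · intro habs; exact absurd (mem_range.mpr hi0) habs
  have hh : ∑ i ∈ range n, ((a i : ℝ)/(B:ℝ)^m) * h (x i) = h (x i0) := by
    rw [Finset.sum_eq_single i0]
    · rw [h0]; push_cast; rw [div_self hBm, one_mul]
    · intro i hi hne; rw [hzero i hi hne]; simp
    · intro habs; exact absurd (mem_range.mpr hi0) habs
  rw [hpt, hh]
  have : (0:ℝ) ≤ (∑ i ∈ range n, (Gm B m (a i) : ℝ)) / (B:ℝ)^m := by positivity
  linarith


lemma discrete (B : ℕ) (hB : 2 ≤ B) (U : Set E) (hU : Convex ℝ U) (h : E → ℝ)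
    (hac : ∀ y : Fin B → E, (∀ i, y i ∈ U) →
      h ((B : ℝ)⁻¹ • ∑ i, y i) ≤ 1 + (1 / (B : ℝ)) * ∑ i, h (y i)) :
    ∀ m n : ℕ, ∀ x : ℕ → E, (∀ i, i < n → x i ∈ U) → ∀ a : ℕ → ℕ,
      (∑ i ∈ range n, a i = B ^ m) →
      h (∑ i ∈ range n, ((a i : ℝ) / (B:ℝ)^m) • x i) ≤
        (∑ i ∈ range n, (Gm B m (a i) : ℝ)) / (B:ℝ)^m
          + ∑ i ∈ range n, ((a i : ℝ)/(B:ℝ)^m) * h (x i) := by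
  intro m
  induction m with
  | zero =>
    intro n x hx a hsum
    have hex : ∃ i ∈ range n, a i ≠ 0 := by
      by_contra hc
      push_neg at hc
      rw [Finset.sum_eq_zero hc] at hsum
      simp at hsum
    obtain ⟨i0, hi0, hne⟩ := hex
    have hle : a i0 ≤ 1 := by
      calc a i0 ≤ ∑ i ∈ range n, a i := Finset.single_le_sum (fun i _ => Nat.zero_le _) hi0
      _ = 1 := by rw [hsum, pow_zero]
    have h0 : a i0 = B ^ 0 := by rw [pow_zero]; omega
    exact discrete_single B 0 n hB h x a i0 (mem_range.mp hi0) h0 hsum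
  | succ m IH =>
    intro n x hx a hsum
    by_cases hex : ∃ i ∈ range n, a i = B ^ (m+1)
    · obtain ⟨i0, hi0, h0⟩ := hex
      exact discrete_single B (m+1) n hB h x a i0 (mem_range.mp hi0) h0 hsum
    · push_neg at hex
      have hmod : ∀ i ∈ range n, a i % B ^ (m+1) = a i := by
        intro i hi
        apply Nat.mod_eq_of_lt
        have : a i ≤ B ^ (m+1) := hsum ▸ Finset.single_le_sum (f := a) (fun i _ => Nat.zero_le _) hi
        exact lt_of_le_of_ne this (hex i hi)
      have ha' : ∑ i ∈ range n, a i = B * B ^ m := by rw [hsum]; ring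
      obtain ⟨c, hrow, hcol, hdig⟩ := pack B m B hB n a ha'
      have hBm : ((B:ℝ))^m ≠ 0 := by positivity
      have hBR : (B:ℝ) ≠ 0 := by positivity
      set y : Fin B → E := fun j => ∑ i ∈ range n, ((c i j.val : ℝ)/(B:ℝ)^m) • x i with hy
      have hcolR : ∀ j : Fin B, ∑ i ∈ range n, ((c i j.val : ℝ)/(B:ℝ)^m) = 1 := by
        intro j
        rw [← Finset.sum_div]
        rw [show (∑ i ∈ range n, ((c i j.val : ℕ):ℝ)) = (((B:ℕ))^m : ℝ) by
          exact_mod_cast congrArg (Nat.cast : ℕ → ℝ) (hcol j.val j.isLt)]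
        push_cast
        exact div_self hBm
      have hyU : ∀ j : Fin B, y j ∈ U := by
        intro j
        exact hU.sum_mem (fun i hi => by positivity) (hcolR j) (fun i hi => hx i (mem_range.mp hi))
      have hIH : ∀ j : Fin B, h (y j) ≤
          (∑ i ∈ range n, (Gm B m (c i j.val) : ℝ)) / (B:ℝ)^m
            + ∑ i ∈ range n, ((c i j.val : ℝ)/(B:ℝ)^m) * h (x i) :=
        fun j => IH n x hx (fun i => c i j.val) (hcol j.val j.isLt)
      have hrowR : ∀ i ∈ range n, ∑ j : Fin B, ((c i j.val : ℝ)) = (a i : ℝ) := by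
        intro i hi
        rw [Fin.sum_univ_eq_sum_range (fun j => ((c i j : ℕ) : ℝ)) B]
        exact_mod_cast congrArg (Nat.cast : ℕ → ℝ) (hrow i (mem_range.mp hi))
      have hscal : ∀ z : ℝ, (1/(B:ℝ)) * (z/(B:ℝ)^m) = z/(B:ℝ)^(m+1) := by
        intro z
        rw [div_mul_div_comm, one_mul, ← pow_succ']
      have hpt : (B:ℝ)⁻¹ • ∑ j : Fin B, y j
          = ∑ i ∈ range n, ((a i : ℝ) / (B:ℝ)^(m+1)) • x i := by
        have h1 : ∑ j : Fin B, y j = ∑ i ∈ range n, (((a i : ℝ))/(B:ℝ)^m) • x i := by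
          rw [hy, Finset.sum_comm]
          refine Finset.sum_congr rfl fun i hi => ?_
          rw [← Finset.sum_smul, ← Finset.sum_div, hrowR i hi]
        rw [h1, Finset.smul_sum]
        refine Finset.sum_congr rfl fun i hi => ?_
        rw [smul_smul]
        congr 1
        rw [← hscal, one_div]
      have hGrec : ∀ b : ℕ, Gm B (m+1) b = b % B ^ (m+1) + Gm B m b := by
        intro b
        show ∑ k ∈ range (m+1), b % B ^ (m+1-k) = _
        rw [Finset.sum_range_succ' (fun k => b % B ^ (m+1-k)) m]
        simp only [Nat.sub_zero]
        rw [add_comm]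
        congr 1
        refine Finset.sum_congr rfl fun k hk => ?_
        congr 2
        omega
      have hGsum : ∑ i ∈ range n, Gm B (m+1) (a i) = B^(m+1) + ∑ i ∈ range n, Gm B m (a i) := by
        rw [Finset.sum_congr rfl (fun i (hi : i ∈ range n) => hGrec (a i)),
          Finset.sum_add_distrib, Finset.sum_congr rfl hmod, hsum]
      have hcle : ∑ j ∈ range B, ∑ i ∈ range n, Gm B m (c i j) ≤ ∑ i ∈ range n, Gm B m (a i) := by
        have e1 : ∑ j ∈ range B, ∑ i ∈ range n, Gm B m (c i j)
            = ∑ k ∈ range m, ∑ i ∈ range n, ∑ j ∈ range B, c i j % B ^ (m-k) := by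
          simp only [Gm]
          calc ∑ j ∈ range B, ∑ i ∈ range n, ∑ k ∈ range m, c i j % B ^ (m-k)
              = ∑ i ∈ range n, ∑ j ∈ range B, ∑ k ∈ range m, c i j % B ^ (m-k) :=
                Finset.sum_comm
            _ = ∑ i ∈ range n, ∑ k ∈ range m, ∑ j ∈ range B, c i j % B ^ (m-k) :=
                Finset.sum_congr rfl fun i _ => Finset.sum_comm
            _ = ∑ k ∈ range m, ∑ i ∈ range n, ∑ j ∈ range B, c i j % B ^ (m-k) :=
                Finset.sum_comm
        have e2 : ∑ i ∈ range n, Gm B m (a i)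
            = ∑ k ∈ range m, ∑ i ∈ range n, a i % B ^ (m-k) := by
          simp only [Gm]; exact Finset.sum_comm
        rw [e1, e2]
        exact Finset.sum_le_sum fun k hk => hdig (m-k) (by omega)
      have hT : (1/(B:ℝ)) * ∑ j : Fin B, ∑ i ∈ range n, ((c i j.val : ℝ)/(B:ℝ)^m) * h (x i)
          = ∑ i ∈ range n, ((a i : ℝ)/(B:ℝ)^(m+1)) * h (x i) := by
        have t1 : ∑ j : Fin B, ∑ i ∈ range n, ((c i j.val : ℝ)/(B:ℝ)^m) * h (x i)
            = ∑ i ∈ range n, ((a i : ℝ)/(B:ℝ)^m) * h (x i) := by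
          rw [Finset.sum_comm]
          refine Finset.sum_congr rfl fun i hi => ?_
          rw [← Finset.sum_mul, ← Finset.sum_div, hrowR i hi]
        rw [t1, Finset.mul_sum]
        refine Finset.sum_congr rfl fun i hi => ?_
        rw [← mul_assoc, hscal]
      have hS : (1/(B:ℝ)) * ∑ j : Fin B, (∑ i ∈ range n, (Gm B m (c i j.val) : ℝ)) / (B:ℝ)^m
          = (∑ j : Fin B, ∑ i ∈ range n, (Gm B m (c i j.val) : ℝ)) / (B:ℝ)^(m+1) := by
        rw [← Finset.sum_div, hscal]
      have hGle : (∑ j : Fin B, ∑ i ∈ range n, (Gm B m (c i j.val) : ℝ))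
          ≤ ∑ i ∈ range n, (Gm B m (a i) : ℝ) := by
        have e3 : (∑ j : Fin B, ∑ i ∈ range n, (Gm B m (c i j.val) : ℝ))
            = ((∑ j ∈ range B, ∑ i ∈ range n, Gm B m (c i j) : ℕ) : ℝ) := by
          rw [Fin.sum_univ_eq_sum_range (fun j => ∑ i ∈ range n, ((Gm B m (c i j) : ℕ) : ℝ)) B]
          push_cast
          rfl
        rw [e3]
        exact_mod_cast hcle
      have hGS : (∑ i ∈ range n, (Gm B (m+1) (a i) : ℝ))
          = (B:ℝ)^(m+1) + ∑ i ∈ range n, (Gm B m (a i) : ℝ) := by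
        have := congrArg (Nat.cast : ℕ → ℝ) hGsum
        push_cast at this
        exact this
      have hpow : (0:ℝ) < (B:ℝ)^(m+1) := by positivity
      calc h (∑ i ∈ range n, ((a i : ℝ) / (B:ℝ)^(m+1)) • x i)
          = h ((B:ℝ)⁻¹ • ∑ j : Fin B, y j) := by rw [hpt]
        _ ≤ 1 + (1/(B:ℝ)) * ∑ j : Fin B, h (y j) := hac y hyU
        _ ≤ 1 + (1/(B:ℝ)) * ∑ j : Fin B,
              ((∑ i ∈ range n, (Gm B m (c i j.val) : ℝ)) / (B:ℝ)^m
                + ∑ i ∈ range n, ((c i j.val : ℝ)/(B:ℝ)^m) * h (x i)) := by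
            have hb : (0:ℝ) ≤ 1/(B:ℝ) := by positivity
            have hs := Finset.sum_le_sum (fun j (_ : j ∈ (univ : Finset (Fin B))) => hIH j)
            have := mul_le_mul_of_nonneg_left hs hb
            linarith
        _ = 1 + (∑ j : Fin B, ∑ i ∈ range n, (Gm B m (c i j.val) : ℝ)) / (B:ℝ)^(m+1)
              + ∑ i ∈ range n, ((a i : ℝ)/(B:ℝ)^(m+1)) * h (x i) := by
            rw [Finset.sum_add_distrib, mul_add, hS, hT]
            ring
        _ ≤ 1 + (∑ i ∈ range n, (Gm B m (a i) : ℝ)) / (B:ℝ)^(m+1)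
              + ∑ i ∈ range n, ((a i : ℝ)/(B:ℝ)^(m+1)) * h (x i) := by
            have hd : (∑ j : Fin B, ∑ i ∈ range n, (Gm B m (c i j.val) : ℝ)) / (B:ℝ)^(m+1)
                ≤ (∑ i ∈ range n, (Gm B m (a i) : ℝ)) / (B:ℝ)^(m+1) :=
              div_le_div_of_nonneg_right hGle hpow.le
            linarith
        _ = (∑ i ∈ range n, (Gm B (m+1) (a i) : ℝ)) / (B:ℝ)^(m+1)
              + ∑ i ∈ range n, ((a i : ℝ)/(B:ℝ)^(m+1)) * h (x i) := by
            rw [hGS]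
            field_simp

lemma summable_HB (B : ℕ) (hB : 2 ≤ B) (t : ℝ) :
    Summable (fun k : ℕ => Int.fract ((B : ℝ) ^ k * t) / (B : ℝ) ^ k) := by
  have hB1 : (1:ℝ) < B := by exact_mod_cast hB
  apply Summable.of_nonneg_of_le (fun k => div_nonneg (Int.fract_nonneg _) (by positivity))
    (fun k => ?_)
    (summable_geometric_of_lt_one (by positivity)
      (by rw [one_div]; exact inv_lt_one_of_one_lt₀ hB1) : Summable fun k:ℕ => (1/(B:ℝ))^k)
  rw [div_pow, one_pow]
  exact div_le_div_of_nonneg_right (Int.fract_lt_one _).le (by positivity)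

lemma HB_nonneg (B : ℕ) (t : ℝ) : 0 ≤ HB B t :=
  tsum_nonneg fun k => div_nonneg (Int.fract_nonneg _) (by positivity)

lemma floor_le_HB (B : ℕ) (hB : 2 ≤ B) (t : ℝ) (ht : 0 ≤ t) (m : ℕ) :
    ((Gm B m ⌊(B:ℝ)^m * t⌋.toNat : ℕ) : ℝ) / (B:ℝ)^m ≤ HB B t := by
  have hB0 : (0:ℝ) < B := by positivity
  set a : ℕ := ⌊(B:ℝ)^m * t⌋.toNat with hadef
  have hfl : (0:ℤ) ≤ ⌊(B:ℝ)^m * t⌋ := Int.floor_nonneg.mpr (by positivity)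
  have haR : ((a:ℝ)) = ((⌊(B:ℝ)^m * t⌋ : ℤ) : ℝ) := by
    rw [hadef]
    exact_mod_cast congrArg (fun z : ℤ => (z : ℝ)) (Int.toNat_of_nonneg hfl)
  set θ := Int.fract ((B:ℝ)^m * t) with hθdef
  have hmt : (B:ℝ)^m * t = (a:ℝ) + θ := by
    rw [haR, hθdef]
    exact (Int.floor_add_fract _).symm
  have hθ0 : 0 ≤ θ := Int.fract_nonneg _
  have hθ1 : θ < 1 := Int.fract_lt_one _
  have key : ∀ k, k < m → ((a % B ^ (m-k) : ℕ) : ℝ)/(B:ℝ)^m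
      ≤ Int.fract ((B:ℝ)^k * t) / (B:ℝ)^k := by
    intro k hk
    set l := m - k with hl
    have hkl : k + l = m := by omega
    have hBl : 0 < B ^ l := Nat.pow_pos (by omega)
    have hqr := Nat.div_add_mod a (B ^ l)
    set q := a / B ^ l with hq
    set r := a % B ^ l with hr
    have hrlt : r < B ^ l := Nat.mod_lt _ hBl
    have hBkl : (B:ℝ)^m = (B:ℝ)^k * (B:ℝ)^l := by rw [← pow_add, hkl]
    have hy0 : (0:ℝ) ≤ ((r:ℝ) + θ)/(B:ℝ)^l := by positivity
    have hy1 : ((r:ℝ) + θ)/(B:ℝ)^l < 1 := by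
      rw [div_lt_one (by positivity)]
      have h1 : (r:ℝ) + 1 ≤ (B:ℝ)^l := by have := Nat.succ_le_of_lt hrlt; exact_mod_cast this
      linarith
    have hkt : (B:ℝ)^k * t = (q:ℝ) + ((r:ℝ) + θ)/(B:ℝ)^l := by
      have h1 : (B:ℝ)^k * t = ((B:ℝ)^m * t)/(B:ℝ)^l := by
        rw [hBkl]
        field_simp
      rw [h1, hmt]
      have h2 : (a:ℝ) = (q:ℝ) * (B:ℝ)^l + r := by
        have h3 : B ^ l * q + r = a := hqr
        have h4 : ((B ^ l * q + r : ℕ) : ℝ) = (a:ℝ) := by exact_mod_cast congrArg (fun z : ℕ => (z:ℝ)) h3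
        push_cast at h4
        linarith
      rw [h2]
      field_simp
      ring
    have hfr : Int.fract ((B:ℝ)^k * t) = ((r:ℝ) + θ)/(B:ℝ)^l := by
      rw [hkt, Int.fract_natCast_add]
      exact Int.fract_eq_self.mpr ⟨hy0, hy1⟩
    rw [hfr, div_div, mul_comm ((B:ℝ)^l) ((B:ℝ)^k), ← hBkl]
    exact div_le_div_of_nonneg_right (by simp [hr]; linarith) (by positivity)
  have hsum : ((Gm B m a : ℕ) : ℝ) / (B:ℝ)^m
      = ∑ k ∈ range m, ((a % B^(m-k) : ℕ):ℝ)/(B:ℝ)^m := by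
    show ((∑ k ∈ range m, a % B ^ (m - k) : ℕ) : ℝ) / (B:ℝ)^m = _
    push_cast
    rw [Finset.sum_div]
  rw [hsum]
  calc ∑ k ∈ range m, ((a % B^(m-k) : ℕ):ℝ)/(B:ℝ)^m
      ≤ ∑ k ∈ range m, Int.fract ((B:ℝ)^k * t)/(B:ℝ)^k :=
        Finset.sum_le_sum fun k hk => key k (mem_range.mp hk)
    _ ≤ HB B t :=
        Summable.sum_le_tsum (range m) (fun k _ => div_nonneg (Int.fract_nonneg _) (by positivity))
          (summable_HB B hB t)

lemma sum_HB_le (B n : ℕ) (hB : 2 ≤ B) (hn : 1 ≤ n) (t : Fin (n+1) → ℝ)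
    (ht0 : ∀ i, 0 ≤ t i) (ht1 : ∑ i, t i = 1) :
    ∑ i, HB B (t i) ≤ kappa B n := by
  have hB1 : (1:ℝ) < B := by exact_mod_cast hB
  have hB0 : (0:ℝ) < B := by linarith
  have hBinv : (1:ℝ)/B < 1 := by rw [one_div]; exact inv_lt_one_of_one_lt₀ hB1
  have hn0 : (0:ℝ) < n := by exact_mod_cast hn
  -- the dominating sequence
  set g : ℕ → ℝ := fun k => min 1 ((n:ℝ)/(B:ℝ)^k) with hg
  have hgnn : ∀ k, 0 ≤ g k := fun k => le_min zero_le_one (by positivity)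
  have hgsummable : Summable g := by
    apply Summable.of_nonneg_of_le hgnn (fun k => min_le_right _ _)
    have : (fun k : ℕ => (n:ℝ)/(B:ℝ)^k) = fun k : ℕ => (n:ℝ) * (1/(B:ℝ))^k := by
      funext k
      rw [div_pow, one_pow]
      ring
    rw [this]
    exact (summable_geometric_of_lt_one (by positivity) hBinv).mul_left _
  -- swap sum and tsum
  have hswap : ∑ i, HB B (t i)
      = ∑' k : ℕ, ∑ i, Int.fract ((B:ℝ)^k * t i) / (B:ℝ)^k :=
    (Summable.tsum_finsetSum (fun i _ => summable_HB B hB (t i))).symm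
  -- pointwise bound
  have hpw : ∀ k : ℕ, ∑ i, Int.fract ((B:ℝ)^k * t i) / (B:ℝ)^k ≤ g k := by
    intro k
    have hsum : ∑ i, Int.fract ((B:ℝ)^k * t i) / (B:ℝ)^k
        = (∑ i, Int.fract ((B:ℝ)^k * t i)) / (B:ℝ)^k := (Finset.sum_div _ _ _).symm
    have hBk : (0:ℝ) < (B:ℝ)^k := by positivity
    have htot : ∑ i, (B:ℝ)^k * t i = (B:ℝ)^k := by rw [← Finset.mul_sum, ht1, mul_one]
    apply le_min
    · -- bound by 1
      rw [hsum, div_le_one hBk]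
      calc ∑ i, Int.fract ((B:ℝ)^k * t i) ≤ ∑ i, (B:ℝ)^k * t i := by
            refine Finset.sum_le_sum fun i _ => ?_
            have h0 : (0:ℝ) ≤ (B:ℝ)^k * t i := mul_nonneg (by positivity) (ht0 i)
            have := Int.floor_nonneg.mpr h0
            have hfr : Int.fract ((B:ℝ)^k * t i) = (B:ℝ)^k * t i - ⌊(B:ℝ)^k * t i⌋ := rfl
            have : (0:ℝ) ≤ (⌊(B:ℝ)^k * t i⌋ : ℝ) := by exact_mod_cast this
            linarith
        _ = (B:ℝ)^k := htot
    · -- bound by n / B^k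
      rw [hsum]
      apply div_le_div_of_nonneg_right ?_ hBk.le
      -- integrality argument
      set Z : ℤ := ∑ i, ⌊(B:ℝ)^k * t i⌋ with hZ
      have hS : ∑ i, Int.fract ((B:ℝ)^k * t i) = (B:ℝ)^k - (Z:ℝ) := by
        have he : ∑ i, Int.fract ((B:ℝ)^k * t i)
            = ∑ i, ((B:ℝ)^k * t i - (⌊(B:ℝ)^k * t i⌋ : ℝ)) := rfl
        rw [he, Finset.sum_sub_distrib, htot, hZ]
        push_cast
        ring
      have hlt : ∑ i, Int.fract ((B:ℝ)^k * t i) < n + 1 := by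
        calc ∑ i, Int.fract ((B:ℝ)^k * t i) < ∑ _i : Fin (n+1), (1:ℝ) := by
              refine Finset.sum_lt_sum_of_nonempty ⟨0, mem_univ 0⟩ fun i _ => Int.fract_lt_one _
          _ = n + 1 := by simp
      have hZint : ((B:ℝ)^k - (Z:ℝ)) < (n:ℝ) + 1 := by rw [← hS]; exact hlt
      have hint : ((B^k : ℤ) : ℝ) - (Z:ℝ) < ((n:ℤ) : ℝ) + 1 := by push_cast; push_cast at hZint; linarith
      have : (B^k : ℤ) - Z < (n:ℤ) + 1 := by exact_mod_cast hint
      have hle : (B^k : ℤ) - Z ≤ (n:ℤ) := by omega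
      rw [hS]
      calc (B:ℝ)^k - (Z:ℝ) = (((B^k : ℤ) - Z : ℤ) : ℝ) := by push_cast; ring
        _ ≤ ((n:ℤ):ℝ) := by exact_mod_cast hle
        _ = (n:ℝ) := by push_cast; rfl
  -- κ data
  set κ : ℤ := ⌊Real.logb B n⌋ with hκ
  have hκ0 : 0 ≤ κ := Int.floor_nonneg.mpr (Real.logb_nonneg hB1 (by exact_mod_cast hn))
  set K : ℕ := κ.toNat with hK
  have hκK : κ = (K:ℤ) := (Int.toNat_of_nonneg hκ0).symm
  have hcrit : ∀ k : ℕ, (B:ℝ)^k ≤ n ↔ k ≤ K := by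
    intro k
    rw [show ((B:ℝ))^k = (B:ℝ)^(k:ℝ) by rw [Real.rpow_natCast]]
    rw [← Real.le_logb_iff_rpow_le hB1 hn0]
    constructor
    · intro h1
      have : (k:ℤ) ≤ κ := Int.le_floor.mpr (by exact_mod_cast h1)
      omega
    · intro h1
      have h2 : (k:ℤ) ≤ κ := by omega
      have := Int.le_floor.mp h2
      exact_mod_cast this
  -- split the tsum
  have hsplit : ∑' k, g k = (∑ k ∈ range (K+1), g k) + ∑' k, g (k + (K+1)) :=
    (Summable.sum_add_tsum_nat_add (K+1) hgsummable).symm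
  have hhead : ∑ k ∈ range (K+1), g k ≤ K + 1 := by
    calc ∑ k ∈ range (K+1), g k ≤ ∑ _k ∈ range (K+1), (1:ℝ) :=
          Finset.sum_le_sum fun k _ => min_le_left _ _
      _ = K + 1 := by simp
  have htail : ∑' k : ℕ, g (k + (K+1)) ≤ (n:ℝ) / (((B:ℝ) - 1) * (B:ℝ)^K) := by
    have hterm : ∀ k : ℕ, g (k + (K+1)) ≤ ((n:ℝ)/(B:ℝ)^(K+1)) * (1/(B:ℝ))^k := by
      intro k
      calc g (k + (K+1)) ≤ (n:ℝ)/(B:ℝ)^(k + (K+1)) := min_le_right _ _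
        _ = ((n:ℝ)/(B:ℝ)^(K+1)) * (1/(B:ℝ))^k := by
            rw [div_pow, one_pow, div_mul_div_comm, mul_one, pow_add, mul_comm]
    have hgeo : Summable (fun k : ℕ => ((n:ℝ)/(B:ℝ)^(K+1)) * (1/(B:ℝ))^k) :=
      (summable_geometric_of_lt_one (by positivity) hBinv).mul_left _
    calc ∑' k : ℕ, g (k + (K+1)) ≤ ∑' k : ℕ, ((n:ℝ)/(B:ℝ)^(K+1)) * (1/(B:ℝ))^k :=
          Summable.tsum_le_tsum hterm ((summable_nat_add_iff (K+1)).mpr hgsummable) hgeo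
      _ = ((n:ℝ)/(B:ℝ)^(K+1)) * (1 - 1/(B:ℝ))⁻¹ := by
          rw [tsum_mul_left, tsum_geometric_of_lt_one (by positivity) hBinv]
      _ = (n:ℝ) / (((B:ℝ) - 1) * (B:ℝ)^K) := by
          rw [pow_succ]
          have hBne : (B:ℝ) ≠ 0 := by linarith
          have hB1ne : (B:ℝ) - 1 ≠ 0 := by
            intro hcon
            have : (B:ℝ) = 1 := by linarith
            linarith
          field_simp
  -- combine
  have hmain : ∑ i, HB B (t i) ≤ ∑' k, g k := by
    rw [hswap]
    exact Summable.tsum_le_tsum hpw (by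
      apply Summable.of_nonneg_of_le ?_ hpw hgsummable
      intro k
      exact Finset.sum_nonneg fun i _ => div_nonneg (Int.fract_nonneg _) (by positivity)) hgsummable
  have hkap : kappa B n = (K:ℝ) + 1 + (n:ℝ) / (((B:ℝ) - 1) * (B:ℝ)^K) := by
    rw [kappa, ← hκ, hκK]
    push_cast
    rw [zpow_natCast]
  rw [hkap]
  rw [hsplit] at hmain
  linarith
end

theorem stmt7 (B : ℕ) (hB : 2 ≤ B)
    {E : Type*} [NormedAddCommGroup E] [NormedSpace ℝ E]
    (U : Set E) (hU : Convex ℝ U) (h : E → ℝ)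
    (hbdd : ∀ K ⊆ U, IsCompact K → ∃ M : ℝ, ∀ x ∈ K, h x ≤ M)
    (hac : ∀ y : Fin B → E, (∀ i, y i ∈ U) →
      h ((B : ℝ)⁻¹ • ∑ i, y i) ≤ 1 + (1 / (B : ℝ)) * ∑ i, h (y i)) :
    ∀ n : ℕ, 1 ≤ n → ∀ x : Fin (n + 1) → E, (∀ i, x i ∈ U) →
      ∀ t ∈ stdSimplex ℝ (Fin (n + 1)),
        h (∑ i, t i • x i) ≤
            (∑ i : Fin (n + 1), HB B (t i)) + ∑ i, t i * h (x i) ∧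
          h (∑ i, t i • x i) ≤ kappa B n + ∑ i, t i * h (x i) := by
  intro n hn x hx t ht
  have ht0 : ∀ i, 0 ≤ t i := ht.1
  have ht1 : ∑ i, t i = 1 := ht.2
  have hB1 : (1:ℝ) < B := by exact_mod_cast hB
  have hB0 : (0:ℝ) < B := by linarith
  have hBinv : (1:ℝ)/B < 1 := by rw [one_div]; exact inv_lt_one_of_one_lt₀ hB1
  set K : Set E := convexHull ℝ (Set.range x) with hKdef
  have hKU : K ⊆ U := convexHull_min (Set.range_subset_iff.mpr hx) hU
  have hKcomp : IsCompact K := (Set.finite_range x).isCompact_convexHull ℝ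
  obtain ⟨M, hM⟩ := hbdd K hKU hKcomp
  set M' : ℝ := max M 0 with hM'def
  set z := ∑ i, t i • x i with hz
  set C := (∑ i : Fin (n+1), HB B (t i)) + ∑ i, t i * h (x i) with hC
  have key : ∀ m : ℕ, h z ≤ C +
      ((m:ℝ) * ((n:ℝ)+1) + (∑ i, |h (x i)|) + ((n:ℝ)+1) * M') / (B:ℝ)^m := by
    intro m
    have hBm : (0:ℝ) < (B:ℝ)^m := by positivity
    set a : Fin (n+1) → ℕ := fun i => (⌊(B:ℝ)^m * t i⌋).toNat with ha
    have hfl : ∀ i, (0:ℤ) ≤ ⌊(B:ℝ)^m * t i⌋ :=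
      fun i => Int.floor_nonneg.mpr (mul_nonneg hBm.le (ht0 i))
    have haR : ∀ i, ((a i : ℝ)) ≤ (B:ℝ)^m * t i := by
      intro i
      have h1 : ((a i : ℕ) : ℝ) = ((⌊(B:ℝ)^m * t i⌋ : ℤ) : ℝ) := by
        rw [ha]
        exact_mod_cast congrArg (fun z : ℤ => (z:ℝ)) (Int.toNat_of_nonneg (hfl i))
      rw [h1]
      exact Int.floor_le _
    have haR2 : ∀ i, (B:ℝ)^m * t i < (a i : ℝ) + 1 := by
      intro i
      have h1 : ((a i : ℕ) : ℝ) = ((⌊(B:ℝ)^m * t i⌋ : ℤ) : ℝ) := by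
        rw [ha]
        exact_mod_cast congrArg (fun z : ℤ => (z:ℝ)) (Int.toNat_of_nonneg (hfl i))
      rw [h1]
      exact Int.lt_floor_add_one _
    set A : ℕ := ∑ i, a i with hA
    have hAR : ((A:ℕ):ℝ) = ∑ i, (a i : ℝ) := by rw [hA]; push_cast; rfl
    have hAle : A ≤ B^m := by
      have h1 : ((A:ℕ):ℝ) ≤ (B:ℝ)^m := by
        rw [hAR]
        calc ∑ i, (a i : ℝ) ≤ ∑ i, (B:ℝ)^m * t i := Finset.sum_le_sum fun i _ => haR i
          _ = (B:ℝ)^m := by rw [← Finset.mul_sum, ht1, mul_one]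
      exact_mod_cast h1
    set ρ : ℕ := B^m - A with hρdef
    have hρle : ρ ≤ n+1 := by
      have h1 : (B:ℝ)^m < ((A:ℕ):ℝ) + ((n:ℝ)+1) := by
        have h2 : ∑ i, (B:ℝ)^m * t i < ∑ i, ((a i:ℝ) + 1) :=
          Finset.sum_lt_sum_of_nonempty ⟨0, mem_univ _⟩ fun i _ => haR2 i
        rw [← Finset.mul_sum, ht1, mul_one, Finset.sum_add_distrib, ← hAR] at h2
        simpa using h2
      have h2 : ((B^m : ℕ):ℝ) < (((A + (n+1)) : ℕ):ℝ) := by push_cast; push_cast at h1; linarith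
      have h3 : B^m < A + (n+1) := by exact_mod_cast h2
      omega
    have hρR : ((ρ:ℕ):ℝ) = (B:ℝ)^m - ((A:ℕ):ℝ) := by
      rw [hρdef]
      have := Nat.cast_sub (R := ℝ) hAle
      rw [this]
      push_cast
      ring
    set δ : Fin (n+1) → ℝ := fun i => t i - (a i:ℝ)/(B:ℝ)^m with hδ
    have hδ0 : ∀ i, 0 ≤ δ i := by
      intro i
      rw [hδ]
      have := haR i
      simp only []
      rw [sub_nonneg, div_le_iff₀ hBm]
      linarith
    have hδ1 : ∀ i, δ i ≤ 1/(B:ℝ)^m := by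
      intro i
      rw [hδ]
      have := haR2 i
      simp only []
      rw [sub_le_iff_le_add, ← add_div, le_div_iff₀ hBm]
      linarith
    have hδsum : ∑ i, δ i = ((ρ:ℕ):ℝ)/(B:ℝ)^m := by
      rw [hδ, hρR]
      rw [Finset.sum_sub_distrib, ht1, ← Finset.sum_div, ← hAR]
      field_simp
    have hδz : ρ = 0 → ∀ i, δ i = 0 := by
      intro h0 i
      have hs : ∑ i, δ i = 0 := by rw [hδsum, h0]; simp
      exact (Finset.sum_eq_zero_iff_of_nonneg (fun i _ => hδ0 i)).mp hs i (mem_univ i)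
    set w : E := if h0 : ρ = 0 then x 0 else ((B:ℝ)^m/((ρ:ℕ):ℝ)) • ∑ i, δ i • x i with hw
    have hwK : w ∈ K := by
      rw [hw]
      split_ifs with h0
      · exact subset_convexHull ℝ _ ⟨0, rfl⟩
      · have hρpos : (0:ℝ) < ((ρ:ℕ):ℝ) := by
          exact_mod_cast Nat.pos_of_ne_zero h0
        have he : ((B:ℝ)^m/((ρ:ℕ):ℝ)) • ∑ i, δ i • x i
            = ∑ i, (((B:ℝ)^m/((ρ:ℕ):ℝ)) * δ i) • x i := by
          rw [Finset.smul_sum]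
          exact Finset.sum_congr rfl fun i _ => smul_smul _ _ _
        rw [he]
        apply (convex_convexHull ℝ _).sum_mem
        · intro i _
          exact mul_nonneg (by positivity) (hδ0 i)
        · rw [← Finset.mul_sum, hδsum]
          field_simp
        · intro i _
          exact subset_convexHull ℝ _ ⟨i, rfl⟩
    have hwv : (((ρ:ℕ):ℝ)/(B:ℝ)^m) • w = ∑ i, δ i • x i := by
      rw [hw]
      split_ifs with h0
      · have : ((ρ:ℕ):ℝ) = 0 := by rw [h0]; simp
        rw [this]
        rw [Finset.sum_congr rfl (fun i (_ : i ∈ univ) => by rw [hδz h0 i, zero_smul])]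
        simp
      · rw [smul_smul]
        have hρpos : (0:ℝ) < ((ρ:ℕ):ℝ) := by exact_mod_cast Nat.pos_of_ne_zero h0
        rw [show ((ρ:ℕ):ℝ)/(B:ℝ)^m * ((B:ℝ)^m/((ρ:ℕ):ℝ)) = 1 by field_simp]
        rw [one_smul]
    -- ℕ-indexed data
    set X : ℕ → E := fun i => if hi : i < n+1 then x ⟨i, hi⟩ else w with hX
    set aa : ℕ → ℕ := fun i => if hi : i < n+1 then a ⟨i, hi⟩ else ρ with haa
    have hXU : ∀ i, i < n+2 → X i ∈ U := by
      intro i hi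
      simp only [hX]
      split_ifs with h1
      · exact hx _
      · exact hKU hwK
    have haaA : ∑ i ∈ range (n+1), aa i = A := by
      rw [hA, ← Fin.sum_univ_eq_sum_range (fun i => aa i) (n+1)]
      refine Finset.sum_congr rfl fun i _ => ?_
      simp only [haa]
      rw [dif_pos i.isLt]
    have hsumaa : ∑ i ∈ range (n+2), aa i = B^m := by
      rw [Finset.sum_range_succ, haaA]
      simp only [haa]
      rw [dif_neg (lt_irrefl (n+1))]
      omega
    have hptfin : ∀ g : Fin (n+1) → ℝ,
        ∑ i ∈ range (n+1), (((aa i : ℕ):ℝ)/(B:ℝ)^m) • X i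
          = ∑ i : Fin (n+1), (((a i : ℕ):ℝ)/(B:ℝ)^m) • x i := by
      intro g
      rw [← Fin.sum_univ_eq_sum_range (fun i => (((aa i : ℕ):ℝ)/(B:ℝ)^m) • X i) (n+1)]
      refine Finset.sum_congr rfl fun i _ => ?_
      simp only [haa, hX]
      rw [dif_pos i.isLt, dif_pos i.isLt]
    have hpoint : ∑ i ∈ range (n+2), (((aa i : ℕ):ℝ)/(B:ℝ)^m) • X i = z := by
      rw [Finset.sum_range_succ, hptfin (fun _ => 0)]
      have h1 : (((aa (n+1) : ℕ):ℝ)/(B:ℝ)^m) • X (n+1) = (((ρ:ℕ):ℝ)/(B:ℝ)^m) • w := by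
        simp only [haa, hX]
        rw [dif_neg (lt_irrefl (n+1)), dif_neg (lt_irrefl (n+1))]
      rw [h1, hwv, hz, ← Finset.sum_add_distrib]
      refine Finset.sum_congr rfl fun i _ => ?_
      rw [← add_smul]
      congr 1
      rw [hδ]
      ring
    have hdisc := discrete B hB U hU h hac m (n+2) X hXU aa hsumaa
    rw [hpoint] at hdisc
    -- bound the Gm part
    have hGm1 : ∀ i : Fin (n+1), ((Gm B m (a i) : ℕ):ℝ)/(B:ℝ)^m ≤ HB B (t i) := by
      intro i
      have := floor_le_HB B hB (t i) (ht0 i) m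
      rw [ha]
      exact this
    have hGmρ : ((Gm B m ρ : ℕ):ℝ) ≤ (m:ℝ) * ((n:ℝ)+1) := by
      have h1 : Gm B m ρ ≤ m * (n+1) := by
        calc Gm B m ρ ≤ ∑ _k ∈ range m, ρ := Finset.sum_le_sum fun k _ => Nat.mod_le _ _
          _ = m * ρ := by rw [Finset.sum_const, card_range, smul_eq_mul]
          _ ≤ m * (n+1) := Nat.mul_le_mul_left m hρle
      calc ((Gm B m ρ : ℕ):ℝ) ≤ ((m * (n+1) : ℕ):ℝ) := by exact_mod_cast h1
        _ = (m:ℝ) * ((n:ℝ)+1) := by push_cast; ring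
    have hGsplit : (∑ i ∈ range (n+2), ((Gm B m (aa i) : ℕ):ℝ))/(B:ℝ)^m
        ≤ (∑ i : Fin (n+1), HB B (t i)) + (m:ℝ) * ((n:ℝ)+1)/(B:ℝ)^m := by
      rw [Finset.sum_range_succ]
      have e1 : ∑ i ∈ range (n+1), ((Gm B m (aa i) : ℕ):ℝ)
          = ∑ i : Fin (n+1), ((Gm B m (a i) : ℕ):ℝ) := by
        rw [← Fin.sum_univ_eq_sum_range (fun i => ((Gm B m (aa i) : ℕ):ℝ)) (n+1)]
        refine Finset.sum_congr rfl fun i _ => ?_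
        simp only [haa]
        rw [dif_pos i.isLt]
      have e2 : ((Gm B m (aa (n+1)) : ℕ):ℝ) = ((Gm B m ρ : ℕ):ℝ) := by
        simp only [haa]
        rw [dif_neg (lt_irrefl (n+1))]
      rw [e1, e2, add_div]
      have h3 : (∑ i : Fin (n+1), ((Gm B m (a i) : ℕ):ℝ))/(B:ℝ)^m
          ≤ ∑ i : Fin (n+1), HB B (t i) := by
        rw [Finset.sum_div]
        exact Finset.sum_le_sum fun i _ => hGm1 i
      have h4 : ((Gm B m ρ : ℕ):ℝ)/(B:ℝ)^m ≤ (m:ℝ) * ((n:ℝ)+1)/(B:ℝ)^m :=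
        div_le_div_of_nonneg_right hGmρ hBm.le
      linarith
    -- bound the h part
    have hHsplit : ∑ i ∈ range (n+2), (((aa i : ℕ):ℝ)/(B:ℝ)^m) * h (X i)
        ≤ (∑ i, t i * h (x i)) + (∑ i, |h (x i)|)/(B:ℝ)^m + (((n:ℝ)+1) * M')/(B:ℝ)^m := by
      rw [Finset.sum_range_succ]
      have e1 : ∑ i ∈ range (n+1), (((aa i : ℕ):ℝ)/(B:ℝ)^m) * h (X i)
          = ∑ i : Fin (n+1), (((a i : ℕ):ℝ)/(B:ℝ)^m) * h (x i) := by
        rw [← Fin.sum_univ_eq_sum_range (fun i => (((aa i : ℕ):ℝ)/(B:ℝ)^m) * h (X i)) (n+1)]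
        refine Finset.sum_congr rfl fun i _ => ?_
        simp only [haa, hX]
        rw [dif_pos i.isLt, dif_pos i.isLt]
      have e2 : (((aa (n+1) : ℕ):ℝ)/(B:ℝ)^m) * h (X (n+1))
          = (((ρ:ℕ):ℝ)/(B:ℝ)^m) * h w := by
        simp only [haa, hX]
        rw [dif_neg (lt_irrefl (n+1)), dif_neg (lt_irrefl (n+1))]
      rw [e1, e2]
      have h5 : ∑ i : Fin (n+1), (((a i : ℕ):ℝ)/(B:ℝ)^m) * h (x i)
          ≤ (∑ i, t i * h (x i)) + (∑ i, |h (x i)|)/(B:ℝ)^m := by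
        rw [Finset.sum_div, ← Finset.sum_add_distrib]
        refine Finset.sum_le_sum fun i _ => ?_
        have hai : ((a i:ℕ):ℝ)/(B:ℝ)^m = t i - δ i := by rw [hδ]; ring
        rw [hai, sub_mul]
        have habs : - (δ i * h (x i)) ≤ |h (x i)|/(B:ℝ)^m := by
          have h6 : - (δ i * h (x i)) ≤ δ i * |h (x i)| := by
            have := neg_abs_le (h (x i))
            have h7 : - h (x i) ≤ |h (x i)| := by
              have := le_abs_self (h (x i)); linarith [abs_nonneg (h (x i)), neg_le_abs (h (x i))]
            calc - (δ i * h (x i)) = δ i * (- h (x i)) := by ring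
              _ ≤ δ i * |h (x i)| := mul_le_mul_of_nonneg_left h7 (hδ0 i)
          have h8 : δ i * |h (x i)| ≤ (1/(B:ℝ)^m) * |h (x i)| :=
            mul_le_mul_of_nonneg_right (hδ1 i) (abs_nonneg _)
          calc - (δ i * h (x i)) ≤ δ i * |h (x i)| := h6
            _ ≤ (1/(B:ℝ)^m) * |h (x i)| := h8
            _ = |h (x i)|/(B:ℝ)^m := by ring
        linarith
      have h9 : (((ρ:ℕ):ℝ)/(B:ℝ)^m) * h w ≤ (((n:ℝ)+1) * M')/(B:ℝ)^m := by
        have hρnn : (0:ℝ) ≤ ((ρ:ℕ):ℝ)/(B:ℝ)^m := by positivity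
        have hhw : h w ≤ M' := le_trans (hM w hwK) (le_max_left _ _)
        have hM'nn : (0:ℝ) ≤ M' := le_max_right _ _
        calc (((ρ:ℕ):ℝ)/(B:ℝ)^m) * h w ≤ (((ρ:ℕ):ℝ)/(B:ℝ)^m) * M' :=
              mul_le_mul_of_nonneg_left hhw hρnn
          _ ≤ (((n:ℝ)+1)/(B:ℝ)^m) * M' := by
              apply mul_le_mul_of_nonneg_right ?_ hM'nn
              apply div_le_div_of_nonneg_right ?_ hBm.le
              exact_mod_cast hρle
          _ = (((n:ℝ)+1) * M')/(B:ℝ)^m := by ring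
      linarith
    calc h z ≤ (∑ i ∈ range (n+2), ((Gm B m (aa i) : ℕ):ℝ))/(B:ℝ)^m
          + ∑ i ∈ range (n+2), (((aa i : ℕ):ℝ)/(B:ℝ)^m) * h (X i) := hdisc
      _ ≤ ((∑ i : Fin (n+1), HB B (t i)) + (m:ℝ) * ((n:ℝ)+1)/(B:ℝ)^m)
          + ((∑ i, t i * h (x i)) + (∑ i, |h (x i)|)/(B:ℝ)^m + (((n:ℝ)+1) * M')/(B:ℝ)^m) :=
          add_le_add hGsplit hHsplit
      _ = C + ((m:ℝ) * ((n:ℝ)+1) + (∑ i, |h (x i)|) + ((n:ℝ)+1) * M') / (B:ℝ)^m := by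
          rw [hC]
          field_simp
          ring
  -- limit
  have hlim : Filter.Tendsto
      (fun m : ℕ => C + ((m:ℝ) * ((n:ℝ)+1) + (∑ i, |h (x i)|) + ((n:ℝ)+1) * M') / (B:ℝ)^m)
      Filter.atTop (nhds C) := by
    have t1 : Filter.Tendsto (fun m:ℕ => (m:ℝ) * (1/(B:ℝ))^m) Filter.atTop (nhds 0) :=
      tendsto_self_mul_const_pow_of_lt_one (by positivity) hBinv
    have t2 : Filter.Tendsto (fun m:ℕ => (1/(B:ℝ))^m) Filter.atTop (nhds 0) :=
      tendsto_pow_atTop_nhds_zero_of_lt_one (by positivity) hBinv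
    have t3 : Filter.Tendsto
        (fun m:ℕ => ((n:ℝ)+1) * ((m:ℝ) * (1/(B:ℝ))^m)
          + ((∑ i, |h (x i)|) + ((n:ℝ)+1) * M') * (1/(B:ℝ))^m)
        Filter.atTop (nhds (((n:ℝ)+1) * 0 + ((∑ i, |h (x i)|) + ((n:ℝ)+1) * M') * 0)) :=
      ((t1.const_mul _)).add (t2.const_mul _)
    simp only [mul_zero, add_zero] at t3
    have heq : (fun m : ℕ => C + ((m:ℝ) * ((n:ℝ)+1) + (∑ i, |h (x i)|) + ((n:ℝ)+1) * M') / (B:ℝ)^m)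
        = fun m : ℕ => C + (((n:ℝ)+1) * ((m:ℝ) * (1/(B:ℝ))^m)
          + ((∑ i, |h (x i)|) + ((n:ℝ)+1) * M') * (1/(B:ℝ))^m) := by
      funext m
      have hBm : ((B:ℝ))^m ≠ 0 := by positivity
      rw [div_pow, one_pow]
      field_simp
      ring
    rw [heq]
    have := (tendsto_const_nhds (x := C) (f := Filter.atTop (α := ℕ))).add t3
    simpa using this
  have h1 : h z ≤ C := ge_of_tendsto' hlim key
  constructor
  · exact h1
  · have h2 := sum_HB_le B n hB hn t ht0 ht1
    calc h z ≤ C := h1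
      _ ≤ kappa B n + ∑ i, t i * h (x i) := by rw [hC]; linarith
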